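/- arXiv:1402.2005 — 4 statements merged into one kernel-verified Lean document; each statement's English description precedes it below -/
import Mathlib

section
/- For every integer t with |t| > 2, the polynomial P(x) = x^3 - (t^4-t)x^2 + (t^5-2t^2)x + 1 is irreducible over the rationals. -/
open Polynomial

theorem stmt4 (t : ℤ) (ht : 2 < |t|) :
    Irreducible (X^3 - C ((t:ℚ)^4 - t) * X^2 + C ((t:ℚ)^5 - 2*t^2) * X + 1 : ℚ[X]) := by
  set pZ : ℤ[X] := X^3 - C (t^4 - t) * X^2 + C (t^5 - 2*t^2) * X + 1 with hpZ
  have hmap : pZ.map (Int.castRingHom ℚ) =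
      (X^3 - C ((t:ℚ)^4 - t) * X^2 + C ((t:ℚ)^5 - 2*t^2) * X + 1 : ℚ[X]) := by
    rw [hpZ]
    simp only [Polynomial.map_add, Polynomial.map_sub, Polynomial.map_mul, Polynomial.map_pow,
      map_X, map_C, Polynomial.map_one, Int.coe_castRingHom]
    push_cast
    ring
  rw [← hmap]
  have hmonic : pZ.Monic := by rw [hpZ]; monicity!
  have hdeg : pZ.natDegree = 3 := by rw [hpZ]; compute_degree!
  have hndeg : (pZ.map (Int.castRingHom ℚ)).natDegree = 3 := by
    rw [natDegree_map_eq_of_injective (Int.cast_injective) pZ, hdeg]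
  rw [Polynomial.irreducible_iff_roots_eq_zero_of_degree_le_three (by omega) (by omega)]
  rw [Multiset.eq_zero_iff_forall_notMem]
  intro a ha
  have hne : pZ.map (Int.castRingHom ℚ) ≠ 0 := by
    intro h; rw [h] at hndeg; simp at hndeg
  rw [mem_roots hne, IsRoot] at ha
  have haev : aeval a pZ = 0 := by
    rwa [aeval_def, eval₂_eq_eval_map]
  obtain ⟨r, hr, hrdvd⟩ := exists_integer_of_is_root_of_monic hmonic haev
  have hc0 : pZ.coeff 0 = 1 := by rw [hpZ]; simp [coeff_X_pow, coeff_one, coeff_X]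
  rw [hc0] at hrdvd
  have hr1 : r = 1 ∨ r = -1 := by
    rcases Int.isUnit_iff.mp (isUnit_of_dvd_one hrdvd) with h | h <;> [left; right] <;> exact h
  have heval : pZ.eval r = 0 := by
    have h2 : ((pZ.eval r : ℤ) : ℚ) = 0 := by
      have h3 := eval_intCast_map (Int.castRingHom ℚ) pZ r
      simp only [Int.cast_id, eq_intCast] at h3
      rw [hr, algebraMap_int_eq, eq_intCast, h3] at ha
      exact ha
    exact_mod_cast h2
  have ht' : 3 ≤ t ∨ t ≤ -3 := by
    rcases abs_cases t with ⟨h1, h2⟩ | ⟨h1, h2⟩ <;> omega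
  rw [hpZ] at heval
  simp only [eval_add, eval_mul, eval_sub, eval_pow, eval_X, eval_C, eval_one] at heval
  rcases hr1 with rfl | rfl
  · rcases ht' with h | h <;> nlinarith [sq_nonneg t, sq_nonneg (t^2), sq_nonneg (t^2 - t), sq_nonneg (t^2 + t)]
  · rcases ht' with h | h <;> nlinarith [sq_nonneg t, sq_nonneg (t^2), sq_nonneg (t^2 - t), sq_nonneg (t^2 + t)]
end

section
/- For every integer t ≥ 10, the polynomial P(x) = x^3 - (t^4-t)x^2 + (t^5-2t^2)x + 1 has three distinct real roots θ1 < θ2 < θ3, satisfying -2/t^5 < θ1 < -1/t^5, t < θ2 < t + 2/t^5, and t^4 - 2t - 1/t^5 < θ3 < t^4 - 2t. -/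
set_option maxHeartbeats 1000000 in
theorem stmt5 (t : ℤ) (ht : 10 ≤ t) :
    ∃ θ1 θ2 θ3 : ℝ, θ1 < θ2 ∧ θ2 < θ3 ∧
      (θ1^3 - ((t:ℝ)^4 - t)*θ1^2 + ((t:ℝ)^5 - 2*t^2)*θ1 + 1 = 0) ∧
      (θ2^3 - ((t:ℝ)^4 - t)*θ2^2 + ((t:ℝ)^5 - 2*t^2)*θ2 + 1 = 0) ∧
      (θ3^3 - ((t:ℝ)^4 - t)*θ3^2 + ((t:ℝ)^5 - 2*t^2)*θ3 + 1 = 0) ∧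
      (-2/(t:ℝ)^5 < θ1 ∧ θ1 < -1/(t:ℝ)^5) ∧
      ((t:ℝ) < θ2 ∧ θ2 < t + 2/(t:ℝ)^5) ∧
      ((t:ℝ)^4 - 2*t - 1/(t:ℝ)^5 < θ3 ∧ θ3 < (t:ℝ)^4 - 2*t) := by
  set T : ℝ := (t:ℝ) with hTdef
  have hT : (10:ℝ) ≤ T := by rw [hTdef]; exact_mod_cast ht
  have hT0 : (0:ℝ) < T := by linarith
  have hTne : T ≠ 0 := ne_of_gt hT0
  have hT2 : (100:ℝ) ≤ T^2 := by nlinarith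
  have hT3 : (1000:ℝ) ≤ T^3 := by nlinarith
  -- power comparison facts
  have q4 : 1000*T ≤ T^4 := by nlinarith
  have q5 : 1000*T^2 ≤ T^5 := by nlinarith [pow_pos hT0 2]
  have q36 : 1000*T^3 ≤ T^6 := by nlinarith [pow_pos hT0 3]
  have q69 : 1000*T^6 ≤ T^9 := by nlinarith [pow_pos hT0 6]
  have q912 : 1000*T^9 ≤ T^12 := by nlinarith [pow_pos hT0 9]
  have q1215 : 1000*T^12 ≤ T^15 := by nlinarith [pow_pos hT0 12]
  have q1518 : 1000*T^15 ≤ T^18 := by nlinarith [pow_pos hT0 15]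
  have p3 : (0:ℝ) < T^3 := by positivity
  have p6 : (0:ℝ) < T^6 := by positivity
  have p9 : (0:ℝ) < T^9 := by positivity
  have p12 : (0:ℝ) < T^12 := by positivity
  have p15 : (0:ℝ) < T^15 := by positivity
  have hp5 : (0:ℝ) < T^5 := by positivity
  set f : ℝ → ℝ := fun x => x^3 - (T^4-T)*x^2 + (T^5-2*T^2)*x + 1 with hf
  have hfc : Continuous f := by rw [hf]; fun_prop
  -- values at endpoints
  have v1 : f (-2/T^5) = (-T^15 + 4*T^12 - 4*T^9 + 4*T^6 - 8)/T^15 := by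
    rw [hf]; field_simp; ring
  have v2 : f (-1/T^5) = (2*T^12 - T^9 + T^6 - 1)/T^15 := by
    rw [hf]; field_simp; ring
  have v3 : f T = 1 := by rw [hf]; ring
  have v4 : f (T + 2/T^5) = (-T^15 + 6*T^12 - 4*T^9 + 16*T^6 + 8)/T^15 := by
    rw [hf]; field_simp; ring
  have v5 : f (T^4 - 2*T - 1/T^5) = (-T^18 + 6*T^15 - 6*T^12 + 2*T^9 - 5*T^6 - 1)/T^15 := by
    rw [hf]; field_simp; ring
  have v6 : f (T^4 - 2*T) = 1 := by rw [hf]; ring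
  -- signs at endpoints
  have h1 : f (-2/T^5) < 0 := by
    rw [v1]; apply div_neg_of_neg_of_pos _ p15
    linarith
  have h2 : 0 < f (-1/T^5) := by
    rw [v2]; apply div_pos _ p15
    linarith
  have h4 : f (T + 2/T^5) < 0 := by
    rw [v4]; apply div_neg_of_neg_of_pos _ p15
    linarith
  have h5 : f (T^4 - 2*T - 1/T^5) < 0 := by
    rw [v5]; apply div_neg_of_neg_of_pos _ p15
    linarith
  have h3 : 0 < f T := by rw [v3]; norm_num
  have h6 : 0 < f (T^4 - 2*T) := by rw [v6]; norm_num
  -- endpoint ordering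
  have e0 : (0:ℝ) < 1/T^5 := by positivity
  have e1 : 2/T^5 ≤ 1 := by rw [div_le_one hp5]; linarith
  have e3 : 1/T^5 ≤ 1 := by rw [div_le_one hp5]; linarith
  have ha : (-2/T^5 : ℝ) < -1/T^5 := by
    rw [div_lt_div_iff₀ hp5 hp5]; nlinarith
  have hb : (-1/T^5 : ℝ) < T := by
    have hq : (-1/T^5 : ℝ) = -(1/T^5) := by ring
    rw [hq]; linarith
  have hc : T < T + 2/T^5 := by
    have : (0:ℝ) < 2/T^5 := by positivity
    linarith
  have hd : T + 2/T^5 < T^4 - 2*T - 1/T^5 := by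
    have hq : (2:ℝ)/T^5 ≤ 1 := e1
    linarith
  have he : T^4 - 2*T - 1/T^5 < T^4 - 2*T := by linarith
  -- IVT
  obtain ⟨θ1, m1, r1⟩ :=
    intermediate_value_Ioo ha.le hfc.continuousOn ⟨h1, h2⟩
  obtain ⟨θ2, m2, r2⟩ :=
    intermediate_value_Ioo' hc.le hfc.continuousOn ⟨h4, h3⟩
  obtain ⟨θ3, m3, r3⟩ :=
    intermediate_value_Ioo he.le hfc.continuousOn ⟨h5, h6⟩
  refine ⟨θ1, θ2, θ3, ?_, ?_, ?_, ?_, ?_, ⟨m1.1, m1.2⟩, ⟨m2.1, m2.2⟩, ⟨m3.1, m3.2⟩⟩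
  · have := m1.2; have := m2.1; linarith
  · have := m2.2; have := m3.1; linarith
  · simpa only [hf] using r1
  · simpa only [hf] using r2
  · simpa only [hf] using r3
end

section
/- For every integer t ≥ 10, the real root θ1 of P(x) = x^3 - (t^4-t)x^2 + (t^5-2t^2)x + 1 lying in (-2/t^5, 0) satisfies θ1 = -1/t^5 - 2/t^8 - κ/t^11 for some real κ with 3 < κ < 3.1. -/
set_option maxHeartbeats 2000000 in
theorem stmt6 (t : ℤ) (ht : 10 ≤ t) (θ1 : ℝ)
    (h1 : -2/(t:ℝ)^5 < θ1) (h2 : θ1 < 0)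
    (hroot : θ1^3 - ((t:ℝ)^4 - t)*θ1^2 + ((t:ℝ)^5 - 2*t^2)*θ1 + 1 = 0) :
    ∃ κ : ℝ, 3 < κ ∧ κ < 3.1 ∧ θ1 = -1/(t:ℝ)^5 - 2/(t:ℝ)^8 - κ/(t:ℝ)^11 := by
  set T : ℝ := (t:ℝ) with hTdef
  have hT : (10:ℝ) ≤ T := by rw [hTdef]; exact_mod_cast ht
  have hT0 : (0:ℝ) < T := by linarith
  have hTne : T ≠ 0 := ne_of_gt hT0
  have hu : (1000:ℝ) ≤ T^3 := by nlinarith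
  -- b is the upper comparison point, a the lower
  obtain ⟨b, hbdef⟩ : ∃ b : ℝ, b = -1/T^5 - 2/T^8 - 3/T^11 := ⟨_, rfl⟩
  obtain ⟨a, hadef⟩ : ∃ a : ℝ, a = -1/T^5 - 2/T^8 - 3.1/T^11 := ⟨_, rfl⟩
  have hb0 : b < 0 := by
    have hbe : b = -(1/T^5 + 2/T^8 + 3/T^11) := by rw [hbdef]; ring
    have : (0:ℝ) < 1/T^5 + 2/T^8 + 3/T^11 := by positivity
    linarith [hbe.ge, hbe.le]
  have e1 : -1/T^5 = -(1/T^5) := by ring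
  have e2 : -2/T^8 = -(2/T^8) := by ring
  have ha0 : a < 0 := by
    have hae : a = -(1/T^5 + 2/T^8 + 3.1/T^11) := by rw [hadef]; ring
    have : (0:ℝ) < 1/T^5 + 2/T^8 + 3.1/T^11 := by positivity
    linarith [hae.ge, hae.le]
  -- P(b) > 0
  have hPbkey : (b^3 - (T^4 - T)*b^2 + (T^5 - 2*T^2)*b + 1) * T^33
      = 3*(T^3)^8 - 6*(T^3)^7 - 3*(T^3)^6 - 3*(T^3)^5 - 12*(T^3)^4
        - 44*(T^3)^3 - 63*(T^3)^2 - 54*(T^3) - 27 := by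
    simp only [hbdef]
    field_simp
    ring
  have hPb : 0 < b^3 - (T^4 - T)*b^2 + (T^5 - 2*T^2)*b + 1 := by
    have hE : 0 < 3*(T^3)^8 - 6*(T^3)^7 - 3*(T^3)^6 - 3*(T^3)^5 - 12*(T^3)^4
        - 44*(T^3)^3 - 63*(T^3)^2 - 54*(T^3) - 27 := by
      set u : ℝ := T^3 with hudef
      nlinarith [pow_pos (show (0:ℝ) < u by linarith) 7, pow_pos (show (0:ℝ) < u by linarith) 6,
        pow_pos (show (0:ℝ) < u by linarith) 5, pow_pos (show (0:ℝ) < u by linarith) 4,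
        pow_pos (show (0:ℝ) < u by linarith) 3, pow_pos (show (0:ℝ) < u by linarith) 2,
        mul_le_mul_of_nonneg_right hu (le_of_lt (pow_pos (show (0:ℝ) < u by linarith) 7)),
        mul_le_mul_of_nonneg_right hu (le_of_lt (pow_pos (show (0:ℝ) < u by linarith) 6)),
        mul_le_mul_of_nonneg_right hu (le_of_lt (pow_pos (show (0:ℝ) < u by linarith) 5)),
        mul_le_mul_of_nonneg_right hu (le_of_lt (pow_pos (show (0:ℝ) < u by linarith) 4)),
        mul_le_mul_of_nonneg_right hu (le_of_lt (pow_pos (show (0:ℝ) < u by linarith) 3)),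
        mul_le_mul_of_nonneg_right hu (le_of_lt (pow_pos (show (0:ℝ) < u by linarith) 2)),
        mul_le_mul_of_nonneg_right hu (show (0:ℝ) ≤ u by linarith),
        hu]
    have hT33 : (0:ℝ) < T^33 := by positivity
    nlinarith [hPbkey, hE, hT33]
  -- P(a) < 0
  have hPakey : (a^3 - (T^4 - T)*a^2 + (T^5 - 2*T^2)*a + 1) * (1000 * T^33)
      = -100*(T^3)^9 + 3200*(T^3)^8 - 6200*(T^3)^7 - 3200*(T^3)^6 - 3210*(T^3)^5
        - 11690*(T^3)^4 - 45200*(T^3)^3 - 66030*(T^3)^2 - 57660*(T^3) - 29791 := by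
    simp only [hadef, show (3.1:ℝ) = 31/10 by norm_num]
    field_simp
    ring
  have hPa : a^3 - (T^4 - T)*a^2 + (T^5 - 2*T^2)*a + 1 < 0 := by
    have hE : -100*(T^3)^9 + 3200*(T^3)^8 - 6200*(T^3)^7 - 3200*(T^3)^6 - 3210*(T^3)^5
        - 11690*(T^3)^4 - 45200*(T^3)^3 - 66030*(T^3)^2 - 57660*(T^3) - 29791 < 0 := by
      set u : ℝ := T^3 with hudef
      nlinarith [pow_pos (show (0:ℝ) < u by linarith) 8, pow_pos (show (0:ℝ) < u by linarith) 7,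
        pow_pos (show (0:ℝ) < u by linarith) 6, pow_pos (show (0:ℝ) < u by linarith) 5,
        pow_pos (show (0:ℝ) < u by linarith) 4, pow_pos (show (0:ℝ) < u by linarith) 3,
        pow_pos (show (0:ℝ) < u by linarith) 2,
        mul_le_mul_of_nonneg_right hu (le_of_lt (pow_pos (show (0:ℝ) < u by linarith) 8)),
        hu]
    have hT33 : (0:ℝ) < 1000 * T^33 := by positivity
    nlinarith [hPakey, hE, hT33]
  -- θ1 < b
  have hθb : θ1 < b := by
    by_contra hcon
    push_neg at hcon  -- b ≤ θ1
    have hd : 0 ≤ θ1 - b := by linarith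
    have p1 : 0 ≤ (θ1 - b) * (θ1^2 + θ1*b + b^2) := by
      apply mul_nonneg hd
      nlinarith [sq_nonneg (θ1 + b), sq_nonneg θ1, sq_nonneg b]
    have p2 : 0 ≤ (T^4 - T) * ((θ1 - b) * (-(θ1 + b))) := by
      apply mul_nonneg
      · nlinarith
      · apply mul_nonneg hd; linarith
    have p3 : 0 ≤ (T^5 - 2*T^2) * (θ1 - b) := by
      apply mul_nonneg
      · nlinarith
      · exact hd
    nlinarith [hroot, hPb, p1, p2, p3]
  -- a < θ1
  have haθ : a < θ1 := by
    by_contra hcon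
    push_neg at hcon  -- θ1 ≤ a
    have hd : 0 ≤ a - θ1 := by linarith
    have p1 : 0 ≤ (a - θ1) * (a^2 + a*θ1 + θ1^2) := by
      apply mul_nonneg hd
      nlinarith [sq_nonneg (a + θ1), sq_nonneg a, sq_nonneg θ1]
    have p2 : 0 ≤ (T^4 - T) * ((a - θ1) * (-(a + θ1))) := by
      apply mul_nonneg
      · nlinarith
      · apply mul_nonneg hd; linarith
    have p3 : 0 ≤ (T^5 - 2*T^2) * (a - θ1) := by
      apply mul_nonneg
      · nlinarith
      · exact hd
    nlinarith [hroot, hPa, p1, p2, p3]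
  -- build κ
  refine ⟨(-θ1 - 1/T^5 - 2/T^8) * T^11, ?_, ?_, ?_⟩
  · have h3' : 3/T^11 < -θ1 - 1/T^5 - 2/T^8 := by
      rw [hbdef] at hθb; linarith [e1, e2]
    have hT11 : (0:ℝ) < T^11 := by positivity
    have := mul_lt_mul_of_pos_right h3' hT11
    rwa [div_mul_cancel₀] at this
    exact ne_of_gt hT11
  · have h3' : -θ1 - 1/T^5 - 2/T^8 < 3.1/T^11 := by
      rw [hadef] at haθ; linarith [e1, e2]
    have hT11 : (0:ℝ) < T^11 := by positivity
    have := mul_lt_mul_of_pos_right h3' hT11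
    rwa [div_mul_cancel₀] at this
    exact ne_of_gt hT11
  · field_simp
    ring
end

section
/- For every integer t ≥ 10, if (x,y) is an integer solution of x^3 - (t^4-t)x^2y + (t^5-2t^2)xy^2 + y^3 = 1 with |y| ≥ 2, then the rational number x/y lies in one of the three disjoint open intervals I1 = (-1.13/t^5, (-1 + 1/|y|^3)/t^5), I2 = (t + (1 - 1/|y|^3)/t^5, t + 1.13/t^5), I3 = (t^4 - 2t - 1.13/t^8, t^4 - 2t - (1 - 1/|y|^3)/t^8). -/
-- powers helper: T^(n+1) ≥ 10 T^n, T^(n+3) ≥ 1000 T^n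
lemma tp1 (T : ℝ) (hT : 10 ≤ T) (n m : ℕ) (hm : n + 1 = m) : 10 * T^n ≤ T^m := by
  subst hm
  have h0 : (0:ℝ) ≤ T := by linarith
  calc 10*T^n ≤ T*T^n := mul_le_mul_of_nonneg_right hT (pow_nonneg h0 n)
  _ = T^(n+1) := by ring

lemma tp3 (T : ℝ) (hT : 10 ≤ T) (n m : ℕ) (hm : n + 3 = m) : 1000 * T^n ≤ T^m := by
  subst hm
  have h0 : (0:ℝ) ≤ T := by linarith
  have h3 : (1000:ℝ) ≤ T^3 := by
    nlinarith [mul_nonneg (sub_nonneg.mpr hT) (mul_self_nonneg T), mul_nonneg (sub_nonneg.mpr hT) h0]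
  calc 1000*T^n ≤ T^3*T^n := mul_le_mul_of_nonneg_right h3 (pow_nonneg h0 n)
  _ = T^(n+3) := by ring

lemma exc1 (T r c E : ℝ) (hT : 10 ≤ T) (hE8 : E ≤ 1/8) (hcE : -E ≤ c)
    (heq : r^3 - (T^4-T)*r^2 + (T^5-2*T^2)*r + 1 = c) (hle : r ≤ -1.13/T^5) : False := by
  have hT0 : (0:ℝ) < T := by linarith
  have hT5 : (0:ℝ) < T^5 := by positivity
  have hs : r*T^5 ≤ -1.13 := by
    have h1 := mul_le_mul_of_nonneg_right hle hT5.le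
    have h2 : (-1.13/T^5)*T^5 = -1.13 := by field_simp
    linarith
  have hr0 : r < 0 := by nlinarith
  have hn : 0 < -r := by linarith
  have h1 : (T^3-2)*(r*T^5) ≤ (T^3-2)*(-1.13) :=
    mul_le_mul_of_nonneg_left hs (by nlinarith [tp3 T hT 0 3 rfl])
  have h2 : r^3*T^3 ≤ 0 := by nlinarith [mul_pos (mul_pos hn hn) hn, pow_pos hT0 3]
  have h3 : 0 ≤ (T^4-T)*r^2*T^3 := by
    apply mul_nonneg (mul_nonneg (by nlinarith [tp3 T hT 1 4 rfl]) (sq_nonneg r)) (by positivity)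
  have h0 : (r^3 - (T^4-T)*r^2 + (T^5-2*T^2)*r + 1)*T^3 = c*T^3 := by rw [heq]
  have h5 : (-(1:ℝ)/8)*T^3 ≤ c*T^3 :=
    mul_le_mul_of_nonneg_right (by linarith) (by positivity)
  nlinarith [h0, h1, h2, h3, h5, tp3 T hT 0 3 rfl]

lemma exc2 (T r c E : ℝ) (hT : 10 ≤ T) (hE : 0 < E) (hE8 : E ≤ 1/8) (hcE : c ≤ E)
    (heq : r^3 - (T^4-T)*r^2 + (T^5-2*T^2)*r + 1 = c)
    (h1 : (-1+E)/T^5 ≤ r) (h2 : r ≤ T + (1-E)/T^5) : False := by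
  have hT0 : (0:ℝ) < T := by linarith
  have hT5 : (0:ℝ) < T^5 := by positivity
  obtain ⟨s, hs⟩ : ∃ s : ℝ, s = r*T^5 := ⟨_, rfl⟩
  have hp : -1+E ≤ s := by rw [hs]; exact (div_le_iff₀ hT5).mp h1
  have hq : s ≤ T^6 + (1-E) := by
    have h2' : r - T ≤ (1-E)/T^5 := by linarith
    have := (le_div_iff₀ hT5).mp h2'
    rw [hs]; linarith [this]
  have hG : s^3 - (T^9-T^6)*s^2 + (T^15-2*T^12)*s + T^15 = c*T^15 := by
    rw [hs]; linear_combination T^15 * heq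
  -- endpoint positivity
  have h19 : (1:ℝ) ≤ T^9 := by
    have := pow_le_pow_left₀ (zero_le_one) (show (1:ℝ) ≤ T by linarith) 9
    simpa using this
  have t12 : (0:ℝ) ≤ T^12 := by positivity
  have t9 : (0:ℝ) ≤ T^9 := by positivity
  have hm2 : (1-E)^2 ≤ 1 := by nlinarith
  have hm3 : (1-E)^3 ≤ 1 := by nlinarith
  have hP1 : T^12 ≤ 2*(1-E)*T^12 - (1-E)^2*T^9 + (1-E)^2*T^6 - (1-E)^3 := by
    have a1 : (7/4)*T^12 ≤ 2*(1-E)*T^12 :=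
      mul_le_mul_of_nonneg_right (by linarith) t12
    have a2 : (1-E)^2*T^9 ≤ 1*T^9 := mul_le_mul_of_nonneg_right hm2 t9
    have a3 : 0 ≤ (1-E)^2*T^6 := by positivity
    linarith [tp3 T hT 9 12 rfl, a1, a2, a3, hm3, h19]
  have hP2 : T^12 ≤ 3*(1-E)*T^12 - (1-E)^2*T^9 + 4*(1-E)^2*T^6 + (1-E)^3 := by
    have a1 : (21/8)*T^12 ≤ 3*(1-E)*T^12 :=
      mul_le_mul_of_nonneg_right (by linarith) t12
    have a2 : (1-E)^2*T^9 ≤ 1*T^9 := mul_le_mul_of_nonneg_right hm2 t9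
    have a3 : 0 ≤ 4*(1-E)^2*T^6 := by positivity
    have a4 : 0 ≤ (1-E)^3 := pow_nonneg (by linarith) 3
    linarith [tp3 T hT 9 12 rfl, a1, a2, a3, a4, h19]
  -- interval facts
  have f1 : 0 ≤ s - (-1+E) := by linarith
  have f2 : 0 ≤ (T^6+(1-E)) - s := by linarith
  have h16 : (1:ℝ) ≤ T^6 := by
    have := pow_le_pow_left₀ (zero_le_one) (show (1:ℝ) ≤ T by linarith) 6
    simpa using this
  have fW : 0 ≤ (T^9-2*T^6) - s := by
    have := tp3 T hT 6 9 rfl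
    linarith
  have f0 : 0 ≤ (T^6+(1-E)) - (-1+E) := by
    have : (0:ℝ) ≤ T^6 := by positivity
    linarith
  have k1 : ((T^6+(1-E)) - s)*T^12 ≤
      ((T^6+(1-E)) - s)*(2*(1-E)*T^12 - (1-E)^2*T^9 + (1-E)^2*T^6 - (1-E)^3) :=
    mul_le_mul_of_nonneg_left hP1 f2
  have k2 : (s - (-1+E))*T^12 ≤
      (s - (-1+E))*(3*(1-E)*T^12 - (1-E)^2*T^9 + 4*(1-E)^2*T^6 + (1-E)^3) :=
    mul_le_mul_of_nonneg_left hP2 f1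
  have k3 : 0 ≤ ((T^6+(1-E)) - (-1+E)) * ((s - (-1+E)) * ((((T^6+(1-E)) - s)) * ((T^9-2*T^6) - s))) :=
    mul_nonneg f0 (mul_nonneg f1 (mul_nonneg f2 fW))
  have hid : ((T^6+(1-E)) - (-1+E))*(c - E)*T^15 =
      ((T^6+(1-E)) - s)*(2*(1-E)*T^12 - (1-E)^2*T^9 + (1-E)^2*T^6 - (1-E)^3)
      + (s - (-1+E))*(3*(1-E)*T^12 - (1-E)^2*T^9 + 4*(1-E)^2*T^6 + (1-E)^3)
      + ((T^6+(1-E)) - (-1+E))*((s - (-1+E)) * ((((T^6+(1-E)) - s)) * ((T^9-2*T^6) - s))) := by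
    linear_combination (-((T^6+(1-E)) - (-1+E))) * hG
  have hfin : (c - E)*(((T^6+(1-E)) - (-1+E))*T^15) ≤ 0 :=
    mul_nonpos_iff.mpr (Or.inr ⟨by linarith, mul_nonneg f0 (by positivity)⟩)
  have hstr : 0 ≤ (2 - 2*E)*T^12 := mul_nonneg (by linarith) t12
  have ht18 : (0:ℝ) < T^18 := by positivity
  linarith [hid, k1, k2, k3, hfin, hstr, ht18]

set_option maxHeartbeats 1600000 in
lemma exc3core (T v c E q : ℝ) (hT : 10 ≤ T) (hcE : -E ≤ c)
    (hH : v^3 - (T^12-T^9)*v^2 + (T^21-2*T^18)*v + T^24 = c*T^24)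
    (hp : T^9 + 1.13*T^3 ≤ v) (hq : v ≤ q)
    (hN1 : (T^9+1.13*T^3)^3 - (T^12-T^9)*(T^9+1.13*T^3)^2 + (T^21-2*T^18)*(T^9+1.13*T^3) + T^24
        + E*T^24 ≤ -T^21)
    (hN2 : q^3 - (T^12-T^9)*q^2 + (T^21-2*T^18)*q + T^24 + E*T^24 ≤ -T^21)
    (hqp : T^9 + 1.13*T^3 + 1 ≤ q)
    (hW : T^12 - T^9 - (T^9+1.13*T^3) - q ≤ T^9 + 1.13*T^3) : False := by
  have hT0 : (0:ℝ) < T := by linarith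
  have f1 : 0 ≤ q - v := by linarith
  have f2 : 0 ≤ v - (T^9+1.13*T^3) := by linarith
  have fW : 0 ≤ v - (T^12 - T^9 - (T^9+1.13*T^3) - q) := by linarith
  have f0 : 0 ≤ q - (T^9+1.13*T^3) := by linarith
  have k1 : (q - v)*((T^9+1.13*T^3)^3 - (T^12-T^9)*(T^9+1.13*T^3)^2
      + (T^21-2*T^18)*(T^9+1.13*T^3) + T^24 + E*T^24) ≤ (q - v)*(-T^21) :=
    mul_le_mul_of_nonneg_left hN1 f1
  have k2 : (v - (T^9+1.13*T^3))*(q^3 - (T^12-T^9)*q^2 + (T^21-2*T^18)*q + T^24 + E*T^24)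
      ≤ (v - (T^9+1.13*T^3))*(-T^21) :=
    mul_le_mul_of_nonneg_left hN2 f2
  have k3 : (q - (T^9+1.13*T^3)) * ((v - (T^9+1.13*T^3)) * ((v - q)
      * (v - (T^12 - T^9 - (T^9+1.13*T^3) - q)))) ≤ 0 := by
    have i1 : (v - q) * (v - (T^12 - T^9 - (T^9+1.13*T^3) - q)) ≤ 0 :=
      mul_nonpos_iff.mpr (Or.inr ⟨by linarith, fW⟩)
    have i2 : (v - (T^9+1.13*T^3)) * ((v - q) * (v - (T^12 - T^9 - (T^9+1.13*T^3) - q))) ≤ 0 :=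
      mul_nonpos_iff.mpr (Or.inl ⟨f2, i1⟩)
    exact mul_nonpos_iff.mpr (Or.inl ⟨f0, i2⟩)
  have hid : (q - (T^9+1.13*T^3))*(c + E)*T^24 =
      (q - v)*((T^9+1.13*T^3)^3 - (T^12-T^9)*(T^9+1.13*T^3)^2
        + (T^21-2*T^18)*(T^9+1.13*T^3) + T^24 + E*T^24)
      + (v - (T^9+1.13*T^3))*(q^3 - (T^12-T^9)*q^2 + (T^21-2*T^18)*q + T^24 + E*T^24)
      + (q - (T^9+1.13*T^3)) * ((v - (T^9+1.13*T^3)) * ((v - q)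
        * (v - (T^12 - T^9 - (T^9+1.13*T^3) - q)))) := by
    linear_combination (-(q - (T^9+1.13*T^3))) * hH
  have hL : 0 ≤ (c + E)*((q - (T^9+1.13*T^3))*T^24) :=
    mul_nonneg (by linarith) (mul_nonneg f0 (by positivity))
  have hstr : 0 ≤ (q - (T^9+1.13*T^3) - 1)*T^21 :=
    mul_nonneg (by linarith) (by positivity)
  have ht21 : (0:ℝ) < T^21 := by positivity
  linarith [hid, k1, k2, k3, hL, hstr, ht21]

set_option maxHeartbeats 1600000 in
lemma exc3 (T r c E : ℝ) (hT : 10 ≤ T) (hE : 0 < E) (hE27 : E ≤ 1/27) (hcE : -E ≤ c)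
    (heq : r^3 - (T^4-T)*r^2 + (T^5-2*T^2)*r + 1 = c)
    (h1 : T + 1.13/T^5 ≤ r) (h2 : r ≤ T^4 - 2*T - 1.13/T^8) : False := by
  have hT0 : (0:ℝ) < T := by linarith
  have hT8 : (0:ℝ) < T^8 := by positivity
  have h13 : (1:ℝ) ≤ T^3 := by
    have := pow_le_pow_left₀ (zero_le_one) (show (1:ℝ) ≤ T by linarith) 3
    simpa using this
  obtain ⟨v, hv⟩ : ∃ v : ℝ, v = r*T^8 := ⟨_, rfl⟩
  have hp : T^9 + 1.13*T^3 ≤ v := by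
    have h1' := mul_le_mul_of_nonneg_right h1 hT8.le
    have h2' : (T + 1.13/T^5)*T^8 = T^9 + 1.13*T^3 := by field_simp
    rw [hv]; linarith
  have hq : v ≤ T^12 - 2*T^9 - 1.13 := by
    have h1' := mul_le_mul_of_nonneg_right h2 hT8.le
    have h2' : (T^4 - 2*T - 1.13/T^8)*T^8 = T^12 - 2*T^9 - 1.13 := by field_simp
    rw [hv]; linarith
  have hH : v^3 - (T^12-T^9)*v^2 + (T^21-2*T^18)*v + T^24 = c*T^24 := by
    rw [hv]; linear_combination T^24 * heq
  have hEb : E*T^24 ≤ (1/27)*T^24 := mul_le_mul_of_nonneg_right hE27 (by positivity)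
  have hN1 : (T^9+1.13*T^3)^3 - (T^12-T^9)*(T^9+1.13*T^3)^2
      + (T^21-2*T^18)*(T^9+1.13*T^3) + T^24 + E*T^24 ≤ -T^21 := by
    linarith [hEb, tp3 T hT 21 24 rfl, tp3 T hT 18 21 rfl, tp3 T hT 15 18 rfl,
      tp3 T hT 12 15 rfl, tp3 T hT 9 12 rfl, tp3 T hT 6 9 rfl, tp3 T hT 3 6 rfl,
      tp3 T hT 0 3 rfl, h13]
  have hN2 : (T^12 - 2*T^9 - 1.13)^3 - (T^12-T^9)*(T^12 - 2*T^9 - 1.13)^2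
      + (T^21-2*T^18)*(T^12 - 2*T^9 - 1.13) + T^24 + E*T^24 ≤ -T^21 := by
    linarith [hEb, tp3 T hT 21 24 rfl, tp3 T hT 18 21 rfl, tp3 T hT 15 18 rfl,
      tp3 T hT 12 15 rfl, tp3 T hT 9 12 rfl, tp3 T hT 6 9 rfl, tp3 T hT 3 6 rfl,
      tp3 T hT 0 3 rfl, h13]
  have hqp : T^9 + 1.13*T^3 + 1 ≤ T^12 - 2*T^9 - 1.13 := by
    linarith [tp3 T hT 9 12 rfl, tp3 T hT 6 9 rfl, tp3 T hT 3 6 rfl, tp3 T hT 0 3 rfl, h13]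
  have hW : T^12 - T^9 - (T^9+1.13*T^3) - (T^12 - 2*T^9 - 1.13) ≤ T^9 + 1.13*T^3 := by
    have t9 : (0:ℝ) ≤ T^9 := by positivity
    linarith [h13]
  exact exc3core T v c E (T^12 - 2*T^9 - 1.13) hT hcE hH hp hq hN1 hN2 hqp hW

set_option maxHeartbeats 3200000 in
lemma exc3h (T r c E : ℝ) (hT : 10 ≤ T) (hE : 0 < E) (hE8 : E ≤ 1/8) (hcE : -E ≤ c)
    (heq : r^3 - (T^4-T)*r^2 + (T^5-2*T^2)*r + 1 = c)
    (h1 : T + 1.13/T^5 ≤ r) (h2 : r ≤ T^4 - 2*T - 1/2) : False := by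
  have hT0 : (0:ℝ) < T := by linarith
  have hT8 : (0:ℝ) < T^8 := by positivity
  have h13 : (1:ℝ) ≤ T^3 := by
    have := pow_le_pow_left₀ (zero_le_one) (show (1:ℝ) ≤ T by linarith) 3
    simpa using this
  obtain ⟨v, hv⟩ : ∃ v : ℝ, v = r*T^8 := ⟨_, rfl⟩
  have hp : T^9 + 1.13*T^3 ≤ v := by
    have h1' := mul_le_mul_of_nonneg_right h1 hT8.le
    have h2' : (T + 1.13/T^5)*T^8 = T^9 + 1.13*T^3 := by field_simp
    rw [hv]; linarith
  have hq : v ≤ T^12 - 2*T^9 - T^8/2 := by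
    have h1' := mul_le_mul_of_nonneg_right h2 hT8.le
    rw [hv]; nlinarith [h1']
  have hH : v^3 - (T^12-T^9)*v^2 + (T^21-2*T^18)*v + T^24 = c*T^24 := by
    rw [hv]; linear_combination T^24 * heq
  have hEb : E*T^24 ≤ (1/8)*T^24 := mul_le_mul_of_nonneg_right hE8 (by positivity)
  have hN1 : (T^9+1.13*T^3)^3 - (T^12-T^9)*(T^9+1.13*T^3)^2
      + (T^21-2*T^18)*(T^9+1.13*T^3) + T^24 + E*T^24 ≤ -T^21 := by
    linarith [hEb, tp3 T hT 21 24 rfl, tp3 T hT 18 21 rfl, tp3 T hT 15 18 rfl,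
      tp3 T hT 12 15 rfl, tp3 T hT 9 12 rfl, tp3 T hT 6 9 rfl, tp3 T hT 3 6 rfl,
      tp3 T hT 0 3 rfl, h13]
  have hN2 : (T^12 - 2*T^9 - T^8/2)^3 - (T^12-T^9)*(T^12 - 2*T^9 - T^8/2)^2
      + (T^21-2*T^18)*(T^12 - 2*T^9 - T^8/2) + T^24 + E*T^24 ≤ -T^21 := by
    linarith [hEb, tp3 T hT 29 32 rfl, tp3 T hT 26 29 rfl, tp1 T hT 28 29 rfl,
      tp1 T hT 25 26 rfl, tp1 T hT 24 25 rfl, tp3 T hT 21 24 rfl, tp3 T hT 18 21 rfl,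
      tp3 T hT 15 18 rfl, tp3 T hT 12 15 rfl, tp3 T hT 9 12 rfl, tp3 T hT 6 9 rfl,
      tp3 T hT 3 6 rfl, tp3 T hT 0 3 rfl, h13]
  have hqp : T^9 + 1.13*T^3 + 1 ≤ T^12 - 2*T^9 - T^8/2 := by
    linarith [tp3 T hT 9 12 rfl, tp1 T hT 8 9 rfl, tp3 T hT 6 9 rfl, tp3 T hT 3 6 rfl,
      tp3 T hT 0 3 rfl, h13, pow_nonneg hT0.le 8]
  have hW : T^12 - T^9 - (T^9+1.13*T^3) - (T^12 - 2*T^9 - T^8/2) ≤ T^9 + 1.13*T^3 := by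
    linarith [tp1 T hT 8 9 rfl, pow_nonneg hT0.le 3, pow_nonneg hT0.le 8, pow_nonneg hT0.le 9]
  exact exc3core T v c E (T^12 - 2*T^9 - T^8/2) hT hcE hH hp hq hN1 hN2 hqp hW

set_option maxHeartbeats 1600000 in
lemma exc4 (T r c E : ℝ) (hT : 10 ≤ T) (hE : 0 < E) (hE8 : E ≤ 1/8) (hcE : c ≤ E)
    (heq : r^3 - (T^4-T)*r^2 + (T^5-2*T^2)*r + 1 = c)
    (hge : T^4 - 2*T - (1-E)/T^8 ≤ r) : False := by
  have hT0 : (0:ℝ) < T := by linarith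
  have hT8 : (0:ℝ) < T^8 := by positivity
  have h18 : (1:ℝ) ≤ T^18 := by
    have := pow_le_pow_left₀ (zero_le_one) (show (1:ℝ) ≤ T by linarith) 18
    simpa using this
  obtain ⟨u, hu⟩ : ∃ u : ℝ, u = r*T^8 - (T^12 - 2*T^9) := ⟨_, rfl⟩
  have hul : -(1-E) ≤ u := by
    have h1' : T^4 - 2*T - r ≤ (1-E)/T^8 := by linarith
    have := (le_div_iff₀ hT8).mp h1'
    rw [hu]; nlinarith [this]
  have hH : T^24 + (T^24-5*T^21+6*T^18)*u + (2*T^12-5*T^9)*u^2 + u^3 = c*T^24 := by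
    rw [hu]; linear_combination T^24 * heq
  have hD1 : (0:ℝ) ≤ T^24-5*T^21+6*T^18 := by linarith [tp3 T hT 21 24 rfl, pow_nonneg hT0.le 21, pow_nonneg hT0.le 18]
  have hD2 : (0:ℝ) ≤ 2*T^12-5*T^9 := by
    linarith [tp3 T hT 9 12 rfl, pow_nonneg hT0.le 9]
  have hE' : c*T^24 ≤ E*T^24 := mul_le_mul_of_nonneg_right hcE (by positivity)
  have hEb : E*T^24 ≤ (1/8)*T^24 := mul_le_mul_of_nonneg_right hE8 (by positivity)
  have hu2 : (0:ℝ) ≤ u^2 := sq_nonneg u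
  rcases le_or_gt 0 u with hu0 | hu0
  · have k1 : 0 ≤ (T^24-5*T^21+6*T^18)*u := mul_nonneg hD1 hu0
    have k2 : 0 ≤ (2*T^12-5*T^9)*u^2 := mul_nonneg hD2 hu2
    have k3 : 0 ≤ u^3 := pow_nonneg hu0 3
    have ht24 : (0:ℝ) < T^24 := by positivity
    linarith [hH, k1, k2, k3, ht24, hE', hEb]
  · have k1 : (T^24-5*T^21+6*T^18)*(-(1-E)) ≤ (T^24-5*T^21+6*T^18)*u :=
      mul_le_mul_of_nonneg_left hul hD1
    have k2 : 0 ≤ (2*T^12-5*T^9)*u^2 := mul_nonneg hD2 hu2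
    have k3 : (0:ℝ) ≤ u^3 + 1 := by
      nlinarith [mul_nonneg (show (0:ℝ) ≤ u + 1 by linarith)
        (show (0:ℝ) ≤ u^2 - u + 1 by nlinarith [sq_nonneg u, sq_nonneg (u-1)])]
    have j0 : (0:ℝ) ≤ 5*T^21 - 6*T^18 := by linarith [tp3 T hT 18 21 rfl]
    have j1 : (7/8)*(5*T^21 - 6*T^18) ≤ (1-E)*(5*T^21 - 6*T^18) :=
      mul_le_mul_of_nonneg_right (by linarith) j0
    linarith [hH, k1, k2, k3, j1, tp3 T hT 18 21 rfl, h18, hE']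

set_option maxHeartbeats 1600000 in
theorem stmt9 (t x y : ℤ) (ht : 10 ≤ t) (hy : 2 ≤ |y|)
    (h : x^3 - (t^4 - t)*x^2*y + (t^5 - 2*t^2)*x*y^2 + y^3 = 1) :
    ((x:ℝ)/y ∈ Set.Ioo (-1.13/(t:ℝ)^5) ((-1 + 1/(|y|:ℝ)^3)/(t:ℝ)^5) ∨
     (x:ℝ)/y ∈ Set.Ioo ((t:ℝ) + (1 - 1/(|y|:ℝ)^3)/(t:ℝ)^5) ((t:ℝ) + 1.13/(t:ℝ)^5) ∨
     (x:ℝ)/y ∈ Set.Ioo ((t:ℝ)^4 - 2*t - 1.13/(t:ℝ)^8) ((t:ℝ)^4 - 2*t - (1 - 1/(|y|:ℝ)^3)/(t:ℝ)^8)) ∧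
    Disjoint (Set.Ioo (-1.13/(t:ℝ)^5) ((-1 + 1/(|y|:ℝ)^3)/(t:ℝ)^5))
      (Set.Ioo ((t:ℝ) + (1 - 1/(|y|:ℝ)^3)/(t:ℝ)^5) ((t:ℝ) + 1.13/(t:ℝ)^5)) ∧
    Disjoint (Set.Ioo (-1.13/(t:ℝ)^5) ((-1 + 1/(|y|:ℝ)^3)/(t:ℝ)^5))
      (Set.Ioo ((t:ℝ)^4 - 2*t - 1.13/(t:ℝ)^8) ((t:ℝ)^4 - 2*t - (1 - 1/(|y|:ℝ)^3)/(t:ℝ)^8)) ∧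
    Disjoint (Set.Ioo ((t:ℝ) + (1 - 1/(|y|:ℝ)^3)/(t:ℝ)^5) ((t:ℝ) + 1.13/(t:ℝ)^5))
      (Set.Ioo ((t:ℝ)^4 - 2*t - 1.13/(t:ℝ)^8) ((t:ℝ)^4 - 2*t - (1 - 1/(|y|:ℝ)^3)/(t:ℝ)^8)) := by
  have hT : (10:ℝ) ≤ (t:ℝ) := by exact_mod_cast ht
  have hT0 : (0:ℝ) < (t:ℝ) := by linarith
  have hT5 : (0:ℝ) < (t:ℝ)^5 := by positivity
  have hT8 : (0:ℝ) < (t:ℝ)^8 := by positivity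
  have hy0 : y ≠ 0 := by intro h0; rw [h0] at hy; simp at hy
  have hy0' : (y:ℝ) ≠ 0 := Int.cast_ne_zero.mpr hy0
  have hY2 : (2:ℝ) ≤ |(y:ℝ)| := by
    have : ((|y|:ℤ):ℝ) = |(y:ℝ)| := by push_cast; ring
    rw [← this]; exact_mod_cast hy
  have hYpos : (0:ℝ) < |(y:ℝ)| := by linarith
  set T := (t:ℝ) with hTdef
  set r := (x:ℝ)/(y:ℝ) with hrdef
  set E := 1/|(y:ℝ)|^3 with hEdef
  have hE : 0 < E := by rw [hEdef]; positivity
  have hE8 : E ≤ 1/8 := by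
    rw [hEdef]
    rw [div_le_div_iff₀ (by positivity) (by norm_num)]
    nlinarith [pow_le_pow_left₀ (by norm_num : (0:ℝ) ≤ 2) hY2 3]
  have hcabs : |1/(y:ℝ)^3| = E := by
    rw [hEdef, abs_div, abs_one, abs_pow]
  have hcE1 : 1/(y:ℝ)^3 ≤ E := by rw [← hcabs]; exact le_abs_self _
  have hcE2 : -E ≤ 1/(y:ℝ)^3 := by rw [← hcabs]; exact neg_abs_le _
  have hR : (x:ℝ)^3 - ((t:ℝ)^4-(t:ℝ))*(x:ℝ)^2*(y:ℝ) + ((t:ℝ)^5-2*(t:ℝ)^2)*(x:ℝ)*(y:ℝ)^2 + (y:ℝ)^3 = 1 := by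
    exact_mod_cast h
  have heq : r^3 - (T^4-T)*r^2 + (T^5-2*T^2)*r + 1 = 1/(y:ℝ)^3 := by
    rw [hrdef, hTdef]
    field_simp
    linear_combination hR
  constructor
  · -- membership
    have hx1 : -1.13/T^5 < r := by
      by_contra hcon
      push_neg at hcon
      exact exc1 T r (1/(y:ℝ)^3) E hT hE8 hcE2 heq hcon
    have hx4 : r < T^4 - 2*T - (1-E)/T^8 := by
      by_contra hcon
      push_neg at hcon
      exact exc4 T r (1/(y:ℝ)^3) E hT hE hE8 hcE1 heq hcon
    have hm1 : ¬((-1+E)/T^5 ≤ r ∧ r ≤ T + (1-E)/T^5) := by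
      rintro ⟨u1, u2⟩
      exact exc2 T r (1/(y:ℝ)^3) E hT hE hE8 hcE1 heq u1 u2
    have hm2 : ¬(T + 1.13/T^5 ≤ r ∧ r ≤ T^4 - 2*T - 1.13/T^8) := by
      rintro ⟨u1, u2⟩
      have habs : |y| = 2 ∨ 3 ≤ |y| := by omega
      rcases habs with h2' | h3'
      · rcases le_or_gt r (T^4 - 2*T - 1/2) with hsm | hbig
        · exact exc3h T r (1/(y:ℝ)^3) E hT hE hE8 hcE2 heq u1 hsm
        · -- integrality: x = y*(t^4-2t), contradiction
          have hy2R : |(y:ℝ)| = 2 := by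
            have : ((|y|:ℤ):ℝ) = ((2:ℤ):ℝ) := by exact_mod_cast h2'
            rwa [Int.cast_abs, Int.cast_two] at this
          have hdist : |r - (T^4 - 2*T)| < 1/2 := by
            rw [abs_lt]
            constructor
            · linarith
            · have : (0:ℝ) < 1.13/T^8 := by positivity
              linarith
          have hclose : |(x:ℝ) - (y:ℝ)*(T^4 - 2*T)| < 1 := by
            have hxy : (x:ℝ) = r * y := by rw [hrdef]; field_simp
            calc |(x:ℝ) - (y:ℝ)*(T^4 - 2*T)| = |(y:ℝ)| * |r - (T^4 - 2*T)| := by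
                  rw [← abs_mul, hxy]; ring_nf
              _ < 2 * (1/2) := by rw [hy2R]; nlinarith [hdist, abs_nonneg (r - (T^4-2*T))]
              _ = 1 := by norm_num
          have hint : |x - y*(t^4 - 2*t)| < 1 := by
            have hcst : ((x - y*(t^4 - 2*t) : ℤ) : ℝ) = (x:ℝ) - (y:ℝ)*(T^4 - 2*T) := by
              rw [hTdef]; push_cast; ring
            have : |((x - y*(t^4 - 2*t) : ℤ) : ℝ)| < 1 := by rw [hcst]; exact hclose
            rw [← Int.cast_abs] at this
            exact_mod_cast this
          have hx2 : x = y*(t^4 - 2*t) := by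
            have h0 : x - y*(t^4 - 2*t) = 0 := by
              rcases abs_lt.mp hint with ⟨p1, p2⟩
              omega
            linarith [h0]
          rw [hx2] at h
          have hy3 : y^3 = 1 := by linear_combination h
          rcases (abs_eq (by norm_num : (0:ℤ) ≤ 2)).mp h2' with rfl | rfl <;> norm_num at hy3
      · have hE27 : E ≤ 1/27 := by
          rw [hEdef]
          rw [div_le_div_iff₀ (by positivity) (by norm_num)]
          have h3R : (3:ℝ) ≤ |(y:ℝ)| := by
            have : ((|y|:ℤ):ℝ) = |(y:ℝ)| := by push_cast; ring
            rw [← this]; exact_mod_cast h3'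
          nlinarith [pow_le_pow_left₀ (by norm_num : (0:ℝ) ≤ 3) h3R 3]
        exact exc3 T r (1/(y:ℝ)^3) E hT hE hE27 hcE2 heq u1 u2
    rcases lt_or_ge r ((-1+E)/T^5) with c1 | c1
    · left; exact ⟨hx1, by linarith [c1]⟩
    · have c2 : T + (1-E)/T^5 < r := by
        by_contra hcon
        push_neg at hcon
        exact hm1 ⟨c1, hcon⟩
      rcases lt_or_ge r (T + 1.13/T^5) with c3 | c3
      · right; left; exact ⟨by linarith [c2], c3⟩
      · have c4 : T^4 - 2*T - 1.13/T^8 < r := by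
          by_contra hcon
          push_neg at hcon
          exact hm2 ⟨c3, hcon⟩
        right; right; exact ⟨c4, by linarith [hx4]⟩
  · -- disjointness
    have hd1 : (-1+E)/T^5 ≤ 0 := by
      apply div_nonpos_of_nonpos_of_nonneg (by linarith) hT5.le
    have hd2 : 0 ≤ (1-E)/T^5 := div_nonneg (by linarith) hT5.le
    have hd3 : 1.13/T^8 ≤ 1 := by
      rw [div_le_one hT8]
      have := pow_le_pow_left₀ (by norm_num : (0:ℝ) ≤ 10) hT 8
      norm_num at this; linarith
    have hd4 : 1.13/T^5 ≤ 1 := by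
      rw [div_le_one hT5]
      have := pow_le_pow_left₀ (by norm_num : (0:ℝ) ≤ 10) hT 5
      norm_num at this; linarith
    have hd5 : 1000*T ≤ T^4 := by have := tp3 T hT 1 4 rfl; rwa [pow_one] at this
    have hd6 : (0:ℝ) < 1.13/T^8 := by positivity
    have hd7 : (0:ℝ) ≤ (1-E)/T^8 := div_nonneg (by linarith) hT8.le
    refine ⟨?_, ?_, ?_⟩ <;>
    · refine Set.disjoint_left.mpr ?_
      intro z hz1 hz2
      simp only [Set.mem_Ioo] at hz1 hz2
      obtain ⟨a1, a2⟩ := hz1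
      obtain ⟨b1, b2⟩ := hz2
      linarith
end
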